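/- Let λ be a nonnegative continuous linear functional on L^∞(Q_T), and let u, v be measurable matrix-valued functions on Q_T with |D u| ≤ ψ ≤ ψ* and |D v| ≤ ψ a.e., where λ(ψ − |D u|) = 0. Then the pairing satisfies ⟨λ D u, D(v − u)⟩ := λ(D u : D(v − u)) ≤ 0. -/
import Mathlib


open MeasureTheory

open scoped RealInnerProductSpace

/-- If `λ ≥ 0` is a continuous linear functional on `L^∞(Q_T)`, `|D u| ≤ ψ ≤ ψ*`,
`|D v| ≤ ψ` a.e. and `λ(ψ − |D u|) = 0`, then `λ(D u : D(v − u)) ≤ 0`.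
Matrix values carry the Frobenius inner product, modelled by
`EuclideanSpace ℝ (Fin d × Fin d)`. -/
theorem stmt16 {d : ℕ} {α : Type*} [MeasurableSpace α] (μ : Measure α)
    (lam : Lp ℝ ⊤ μ →L[ℝ] ℝ)
    (hpos : ∀ g : Lp ℝ ⊤ μ, (∀ᵐ x ∂μ, 0 ≤ g x) → 0 ≤ lam g)
    (ψS : ℝ) (ψ : α → ℝ)
    (Du Dv : α → EuclideanSpace ℝ (Fin d × Fin d))
    (hu : ∀ᵐ x ∂μ, ‖Du x‖ ≤ ψ x ∧ ψ x ≤ ψS)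
    (hv : ∀ᵐ x ∂μ, ‖Dv x‖ ≤ ψ x)
    (slack : Lp ℝ ⊤ μ) (hslack : ∀ᵐ x ∂μ, slack x = ψ x - ‖Du x‖)
    (hcomp : lam slack = 0)
    (g : Lp ℝ ⊤ μ) (hg : ∀ᵐ x ∂μ, g x = ⟪Du x, Dv x - Du x⟫) :
    lam g ≤ 0 := by
  have key : 0 ≤ lam (ψS • slack - g) := by
    apply hpos
    filter_upwards [hu, hv, hslack, hg, Lp.coeFn_sub (ψS • slack) g,
      Lp.coeFn_smul ψS slack] with x ⟨h1, h2⟩ h3 h4 h5 h6 h7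
    rw [h6]
    simp only [Pi.sub_apply, h7, Pi.smul_apply, smul_eq_mul, h4, h5]
    have hDu : 0 ≤ ‖Du x‖ := norm_nonneg _
    have hstep : ⟪Du x, Dv x - Du x⟫ ≤ ‖Du x‖ * (ψ x - ‖Du x‖) := by
      have h8 : ⟪Du x, Dv x⟫ ≤ ‖Du x‖ * ‖Dv x‖ := real_inner_le_norm _ _
      rw [inner_sub_right, real_inner_self_eq_norm_sq]
      nlinarith [h5]
    nlinarith [hstep, sub_nonneg.mpr h1, h1.trans h2]
  rw [map_sub, lam.map_smul, hcomp, smul_eq_mul, mul_zero, zero_sub] at key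
  linarith
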